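/- Let N ≥ 1, 𝒩 = {1,...,N}, and let (y^n) be a sequence in ℝ^𝒩 with ‖y^n‖_∞ → ∞ as n → ∞, where ‖x‖_∞ = max_{i∈𝒩} |x_i|. Then there exist subsets I, J ⊆ 𝒩 with I ∩ J = ∅ and I ∪ J ≠ ∅, vectors μ ∈ ℝ^I and ν ∈ ℝ^J with all entries nonnegative and with min of the combined family (μ_i)_{i∈I}, (ν_j)_{j∈J} equal to 0, and a subsequence (y^{n_k}) such that for every x ∈ ℝ^𝒩, the values ‖x − y^{n_k}‖_∞ − ‖y^{n_k}‖_∞ converge as k → ∞ to h(x) = max( max_{i∈I} (x_i − μ_i), max_{j∈J} (−x_j − ν_j) ) (where a maximum over an empty index set is omitted). -/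

import Mathlib

open Filter Topology

private lemma aux_max_tendsto_left {u v : ℕ → ℝ} {L : ℝ}
    (hu : Tendsto u atTop (𝓝 L)) (hv : Tendsto v atTop atBot) :
    Tendsto (fun k => max (u k) (v k)) atTop (𝓝 L) := by
  apply hu.congr'
  filter_upwards [hv.eventually_le_atBot (L - 1),
    hu.eventually (eventually_ge_nhds (by linarith : L - 1 < L))] with k h1 h2
  exact (max_eq_left (h1.trans h2)).symm

private lemma aux_max_tendsto_atBot {u v : ℕ → ℝ}
    (hu : Tendsto u atTop atBot) (hv : Tendsto v atTop atBot) :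
    Tendsto (fun k => max (u k) (v k)) atTop atBot := by
  rw [tendsto_atBot]
  intro M
  filter_upwards [hu.eventually_le_atBot M, hv.eventually_le_atBot M] with k h1 h2
  exact max_le h1 h2

private lemma aux_ofReal_top {u : ℕ → ℝ} (_hu : ∀ k, 0 ≤ u k)
    (h : Tendsto (fun k => ENNReal.ofReal (u k)) atTop (𝓝 ⊤)) :
    Tendsto u atTop atTop := by
  rw [tendsto_atTop]
  intro M
  have hlt : ENNReal.ofReal (max M 0) < ⊤ := ENNReal.ofReal_lt_top
  filter_upwards [h.eventually (eventually_gt_nhds hlt)] with k hk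
  have : max M 0 < u k := (ENNReal.ofReal_lt_ofReal_iff_of_nonneg (le_max_right M 0)).1 hk
  exact le_of_lt (lt_of_le_of_lt (le_max_left M 0) this)

private lemma aux_const_sub_atBot {c : ℝ} {u : ℕ → ℝ} (hu : Tendsto u atTop atTop) :
    Tendsto (fun k => c - u k) atTop atBot := by
  rw [tendsto_atBot]
  intro M
  filter_upwards [hu.eventually_ge_atTop (c - M)] with k hk
  linarith

/-- Lemma 5.1 of the paper, for `ℓ^∞(𝒩, ℝ)`. -/
theorem linf_horofunction_subsequence (N : ℕ) (hN : 1 ≤ N) (y : ℕ → Fin N → ℝ)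
    (hy : Tendsto (fun n => ⨆ i, |y n i|) atTop atTop) :
    ∃ I J : Finset (Fin N), ∃ hne : (I ∪ J).Nonempty, Disjoint I J ∧
    ∃ μ ν : Fin N → ℝ,
      (∀ i ∈ I, 0 ≤ μ i) ∧ (∀ j ∈ J, 0 ≤ ν j) ∧
      ((∃ i ∈ I, μ i = 0) ∨ (∃ j ∈ J, ν j = 0)) ∧
    ∃ φ : ℕ → ℕ, StrictMono φ ∧
      ∀ x : Fin N → ℝ,
        Tendsto (fun k => (⨆ i, |x i - y (φ k) i|) - ⨆ i, |y (φ k) i|) atTop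
          (𝓝 ((I ∪ J).sup' hne fun i => if i ∈ I then x i - μ i else -x i - ν i)) := by
  haveI : Nonempty (Fin N) := ⟨⟨0, hN⟩⟩
  set R : ℕ → ℝ := fun n => Finset.univ.sup' Finset.univ_nonempty fun i => |y n i| with hRdef
  have hRsup : ∀ n, (⨆ i, |y n i|) = R n := fun n => (Finset.sup'_univ_eq_ciSup _).symm
  have hyR : Tendsto R atTop atTop := hy.congr hRsup
  have hyabs : ∀ n i, |y n i| ≤ R n := fun n i => by
    simp only [hRdef]; exact Finset.le_sup' (fun j => |y n j|) (Finset.mem_univ i)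
  set a : ℕ → Fin N → ℝ := fun n i => R n - y n i with hadef
  set b : ℕ → Fin N → ℝ := fun n i => R n + y n i with hbdef
  have ha0 : ∀ n i, 0 ≤ a n i := fun n i => by
    have := (abs_le.1 (hyabs n i)).2; simp only [hadef]; linarith
  have hb0 : ∀ n i, 0 ≤ b n i := fun n i => by
    have := (abs_le.1 (hyabs n i)).1; simp only [hbdef]; linarith
  -- sequential compactness in (ℝ≥0∞ × ℝ≥0∞)^N
  obtain ⟨L, -, φ, hφ, hLc⟩ :=
    (isCompact_univ (X := Fin N → ENNReal × ENNReal)).tendsto_subseq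
      (x := fun n i => (ENNReal.ofReal (a n i), ENNReal.ofReal (b n i)))
      (fun n => Set.mem_univ _)
  set A : Fin N → ENNReal := fun i => (L i).1 with hAdef
  set B : Fin N → ENNReal := fun i => (L i).2 with hBdef
  have hA : ∀ i, Tendsto (fun k => ENNReal.ofReal (a (φ k) i)) atTop (𝓝 (A i)) := fun i =>
    (continuous_fst.tendsto (L i)).comp (tendsto_pi_nhds.1 hLc i)
  have hB : ∀ i, Tendsto (fun k => ENNReal.ofReal (b (φ k) i)) atTop (𝓝 (B i)) := fun i =>
    (continuous_snd.tendsto (L i)).comp (tendsto_pi_nhds.1 hLc i)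
  set I : Finset (Fin N) := Finset.univ.filter fun i => B i ≠ ⊤ with hIdef
  set J : Finset (Fin N) := Finset.univ.filter fun i => A i ≠ ⊤ with hJdef
  set μ : Fin N → ℝ := fun i => (B i).toReal with hμdef
  set ν : Fin N → ℝ := fun i => (A i).toReal with hνdef
  have hRφ : Tendsto (fun k => R (φ k)) atTop atTop := hyR.comp hφ.tendsto_atTop
  -- real limits
  have hbI : ∀ i, B i ≠ ⊤ → Tendsto (fun k => b (φ k) i) atTop (𝓝 (μ i)) := fun i hi => by
    have h := (ENNReal.tendsto_toReal hi).comp (hB i)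
    exact h.congr fun k => ENNReal.toReal_ofReal (hb0 _ i)
  have haJ : ∀ i, A i ≠ ⊤ → Tendsto (fun k => a (φ k) i) atTop (𝓝 (ν i)) := fun i hi => by
    have h := (ENNReal.tendsto_toReal hi).comp (hA i)
    exact h.congr fun k => ENNReal.toReal_ofReal (ha0 _ i)
  have hbI' : ∀ i, B i = ⊤ → Tendsto (fun k => b (φ k) i) atTop atTop := fun i hi =>
    aux_ofReal_top (fun k => hb0 _ i) (hi ▸ hB i)
  have haJ' : ∀ i, A i = ⊤ → Tendsto (fun k => a (φ k) i) atTop atTop := fun i hi =>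
    aux_ofReal_top (fun k => ha0 _ i) (hi ▸ hA i)
  -- disjointness
  have hdisj : Disjoint I J := by
    rw [Finset.disjoint_left]
    intro i hiI hiJ
    rw [hIdef, Finset.mem_filter] at hiI
    rw [hJdef, Finset.mem_filter] at hiJ
    have h1 : Tendsto (fun k => a (φ k) i + b (φ k) i) atTop (𝓝 (ν i + μ i)) :=
      (haJ i hiJ.2).add (hbI i hiI.2)
    have h2 : Tendsto (fun k => a (φ k) i + b (φ k) i) atTop atTop := by
      have heq : ∀ k, a (φ k) i + b (φ k) i = 2 * R (φ k) := fun k => by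
        simp only [hadef, hbdef]; ring
      rw [tendsto_congr heq]
      exact hRφ.const_mul_atTop (by norm_num)
    exact absurd h2 (not_tendsto_atTop_of_tendsto_nhds h1)
  -- the minimum is zero
  have hmin0 : ∃ i, A i = 0 ∨ B i = 0 := by
    have hconst : Tendsto (fun k => Finset.univ.inf' Finset.univ_nonempty
        (fun i => min (ENNReal.ofReal (a (φ k) i)) (ENNReal.ofReal (b (φ k) i)))) atTop
        (𝓝 (Finset.univ.inf' Finset.univ_nonempty fun i => min (A i) (B i))) :=
      Filter.Tendsto.finset_inf'_nhds_apply Finset.univ_nonempty fun i _ => (hA i).min (hB i)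
    have hzero : ∀ k, Finset.univ.inf' Finset.univ_nonempty
        (fun i => min (ENNReal.ofReal (a (φ k) i)) (ENNReal.ofReal (b (φ k) i))) = 0 := by
      intro k
      obtain ⟨i, -, hi⟩ := Finset.exists_mem_eq_sup' Finset.univ_nonempty
        (fun i => |y (φ k) i|)
      have hRk : R (φ k) = |y (φ k) i| := hi
      have hmab : min (a (φ k) i) (b (φ k) i) = 0 := by
        rcases le_total (y (φ k) i) 0 with h | h
        · rw [min_eq_right (by simp only [hadef, hbdef]; linarith)]
          simp only [hbdef]
          rw [abs_of_nonpos h] at hRk; linarith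
        · rw [min_eq_left (by simp only [hadef, hbdef]; linarith)]
          simp only [hadef]
          rw [abs_of_nonneg h] at hRk; linarith
      refine le_antisymm ?_ zero_le
      calc Finset.univ.inf' Finset.univ_nonempty
            (fun i => min (ENNReal.ofReal (a (φ k) i)) (ENNReal.ofReal (b (φ k) i)))
          ≤ min (ENNReal.ofReal (a (φ k) i)) (ENNReal.ofReal (b (φ k) i)) :=
            Finset.inf'_le _ (Finset.mem_univ i)
        _ = ENNReal.ofReal (min (a (φ k) i) (b (φ k) i)) :=
            (Monotone.map_min (fun _ _ h => ENNReal.ofReal_le_ofReal h)).symm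
        _ = 0 := by rw [hmab]; simp
    have h0 : Finset.univ.inf' Finset.univ_nonempty (fun i => min (A i) (B i)) = 0 :=
      tendsto_nhds_unique hconst ((tendsto_congr hzero).2 tendsto_const_nhds)
    obtain ⟨i, -, hi⟩ := Finset.exists_mem_eq_inf' Finset.univ_nonempty
      (fun i => min (A i) (B i))
    rw [h0] at hi
    rcases min_eq_iff.1 hi.symm with ⟨h, -⟩ | ⟨h, -⟩
    · exact ⟨i, Or.inl h⟩
    · exact ⟨i, Or.inr h⟩
  obtain ⟨i0, hi0⟩ := hmin0
  have hi0mem : i0 ∈ I ∪ J := by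
    rcases hi0 with h | h
    · exact Finset.mem_union_right _ (by rw [hJdef, Finset.mem_filter]; exact ⟨Finset.mem_univ _, by rw [h]; simp⟩)
    · exact Finset.mem_union_left _ (by rw [hIdef, Finset.mem_filter]; exact ⟨Finset.mem_univ _, by rw [h]; simp⟩)
  have hne : (I ∪ J).Nonempty := ⟨i0, hi0mem⟩
  refine ⟨I, J, hne, hdisj, μ, ν, fun i _ => ENNReal.toReal_nonneg,
    fun j _ => ENNReal.toReal_nonneg, ?_, φ, hφ, ?_⟩
  · rcases hi0 with h | h
    · exact Or.inr ⟨i0, by rw [hJdef, Finset.mem_filter]; exact ⟨Finset.mem_univ _, by rw [h]; simp⟩,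
        by rw [hνdef]; simp [h]⟩
    · exact Or.inl ⟨i0, by rw [hIdef, Finset.mem_filter]; exact ⟨Finset.mem_univ _, by rw [h]; simp⟩,
        by rw [hμdef]; simp [h]⟩
  · intro x
    set T : Fin N → ℝ := fun i => if i ∈ I then x i - μ i else -x i - ν i with hTdef
    set S : ℝ := (I ∪ J).sup' hne T with hSdef
    set g : ℕ → Fin N → ℝ := fun k i => max (x i - b (φ k) i) (-x i - a (φ k) i) with hgdef
    -- rewrite the sup-norm difference
    have hX : ∀ k, (⨆ i, |x i - y (φ k) i|) - (⨆ i, |y (φ k) i|)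
        = Finset.univ.sup' Finset.univ_nonempty (g k) := by
      intro k
      have hcomp : (Finset.univ.sup' Finset.univ_nonempty fun i => |x i - y (φ k) i|)
            - R (φ k)
          = Finset.univ.sup' Finset.univ_nonempty
              ((fun t => t - R (φ k)) ∘ fun i => |x i - y (φ k) i|) :=
        Finset.comp_sup'_eq_sup'_comp _ (fun t => t - R (φ k))
          (fun p q => (max_sub_sub_right p q _).symm)
      rw [hRsup, ← Finset.sup'_univ_eq_ciSup, hcomp]
      refine Finset.sup'_congr _ rfl fun i _ => ?_
      simp only [Function.comp, hgdef, hadef, hbdef]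
      rw [abs_sub_comm, abs_eq_max_neg, ← max_sub_sub_right, max_comm]
      congr 1 <;> ring
    -- limit of terms for i ∈ I ∪ J
    have hterms : ∀ i ∈ I ∪ J, Tendsto (fun k => g k i) atTop (𝓝 (T i)) := by
      intro i hi
      by_cases hiI : i ∈ I
      · have hBi : B i ≠ ⊤ := by
          have := hiI; rw [hIdef, Finset.mem_filter] at this; exact this.2
        have hAi : A i = ⊤ := by
          by_contra hAi
          exact (Finset.disjoint_left.1 hdisj hiI)
            (by rw [hJdef, Finset.mem_filter]; exact ⟨Finset.mem_univ _, hAi⟩)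
        have h1 : Tendsto (fun k => x i - b (φ k) i) atTop (𝓝 (x i - μ i)) :=
          tendsto_const_nhds.sub (hbI i hBi)
        have h2 : Tendsto (fun k => -x i - a (φ k) i) atTop atBot :=
          aux_const_sub_atBot (haJ' i hAi)
        rw [hTdef]; simp only [hiI, if_pos]
        exact aux_max_tendsto_left h1 h2
      · have hiJ : i ∈ J := by
          rcases Finset.mem_union.1 hi with h | h
          · exact absurd h hiI
          · exact h
        have hAi : A i ≠ ⊤ := by
          have := hiJ; rw [hJdef, Finset.mem_filter] at this; exact this.2
        have hBi : B i = ⊤ := by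
          by_contra hBi
          exact hiI (by rw [hIdef, Finset.mem_filter]; exact ⟨Finset.mem_univ _, hBi⟩)
        have h1 : Tendsto (fun k => -x i - a (φ k) i) atTop (𝓝 (-x i - ν i)) :=
          tendsto_const_nhds.sub (haJ i hAi)
        have h2 : Tendsto (fun k => x i - b (φ k) i) atTop atBot :=
          aux_const_sub_atBot (hbI' i hBi)
        rw [hTdef]; simp only [hiI, if_neg, not_false_iff]
        have := aux_max_tendsto_left h1 h2
        exact this.congr fun k => by rw [max_comm]
    have hmain : Tendsto (fun k => (I ∪ J).sup' hne fun i => g k i) atTop (𝓝 S) :=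
      Filter.Tendsto.finset_sup'_nhds_apply hne hterms
    -- eventually the full sup equals the sup over I ∪ J
    have hout : ∀ i, i ∉ I ∪ J → Tendsto (fun k => g k i) atTop atBot := by
      intro i hi
      have hAi : A i = ⊤ := by
        by_contra h
        exact hi (Finset.mem_union_right _ (by rw [hJdef, Finset.mem_filter]; exact ⟨Finset.mem_univ _, h⟩))
      have hBi : B i = ⊤ := by
        by_contra h
        exact hi (Finset.mem_union_left _ (by rw [hIdef, Finset.mem_filter]; exact ⟨Finset.mem_univ _, h⟩))
      exact aux_max_tendsto_atBot (aux_const_sub_atBot (hbI' i hBi))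
        (aux_const_sub_atBot (haJ' i hAi))
    have hev : ∀ᶠ k in atTop, Finset.univ.sup' Finset.univ_nonempty (g k)
        = (I ∪ J).sup' hne (g k) := by
      have hub : ∀ᶠ k in atTop, ∀ i ∈ Finset.univ \ (I ∪ J), g k i ≤ S - 1 := by
        rw [Filter.eventually_all_finset]
        intro i hi
        exact ((hout i (Finset.mem_sdiff.1 hi).2).eventually_le_atBot (S - 1))
      have hlb : ∀ᶠ k in atTop, S - 1 ≤ (I ∪ J).sup' hne (g k) :=
        hmain.eventually (eventually_ge_nhds (by linarith : S - 1 < S))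
      filter_upwards [hub, hlb] with k h1 h2
      refine le_antisymm (Finset.sup'_le _ _ fun i hiu => ?_)
        (Finset.sup'_le _ _ fun i hi => Finset.le_sup' (g k) (Finset.mem_univ i))
      by_cases hi : i ∈ I ∪ J
      · exact Finset.le_sup' (g k) hi
      · exact le_trans (h1 i (Finset.mem_sdiff.2 ⟨Finset.mem_univ i, hi⟩)) (le_trans (by linarith) le_rfl)
    have : Tendsto (fun k => Finset.univ.sup' Finset.univ_nonempty (g k)) atTop (𝓝 S) :=
      hmain.congr' (by filter_upwards [hev] with k hk; exact hk.symm)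
    exact (this.congr fun k => (hX k).symm)
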